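/- Let c ≥ 0 and let (a_k) and (β_j) be nonnegative real sequences with (β_j) summable and a_k² ≤ c² + ∑_{j=1}^k β_j a_j for all k ∈ ℕ. Then a_k ≤ c + ∑_{j=1}^∞ β_j for all k ∈ ℕ. -/

import Mathlib

namespace Gronwall

/-- Discrete Gronwall lemma: if `c ≥ 0`, `(a_k)`, `(β_j)` are nonnegative,
`(β_j)` is summable, and `a_k² ≤ c² + ∑_{j=1}^k β_j a_j` for all `k`,
then `a_k ≤ c + ∑_{j} β_j` for all `k`. -/
theorem discrete_gronwall (c : ℝ) (hc : 0 ≤ c) (a β : ℕ → ℝ)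
    (ha : ∀ k, 0 ≤ a k) (hβ : ∀ j, 0 ≤ β j) (hβsum : Summable β)
    (hineq : ∀ k, (a k) ^ 2 ≤ c ^ 2 + ∑ j ∈ Finset.Icc 1 k, β j * a j) :
    ∀ k, a k ≤ c + ∑' j, β j := by
  intro k
  have hB0 : 0 ≤ ∑' j, β j := tsum_nonneg hβ
  obtain ⟨m, hm, hmax⟩ := (Finset.range (k + 1)).exists_max_image a
    ⟨k, Finset.self_mem_range_succ k⟩
  have hak : a k ≤ a m := hmax k (Finset.self_mem_range_succ k)
  have hmk : m ≤ k := Nat.lt_succ_iff.mp (Finset.mem_range.mp hm)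
  suffices h : a m ≤ c + ∑' j, β j by linarith
  have h1 : (a m) ^ 2 ≤ c ^ 2 + (∑ j ∈ Finset.Icc 1 m, β j) * a m := by
    calc (a m) ^ 2 ≤ c ^ 2 + ∑ j ∈ Finset.Icc 1 m, β j * a j := hineq m
    _ ≤ c ^ 2 + ∑ j ∈ Finset.Icc 1 m, β j * a m := by
        gcongr with j hj
        · exact hβ j
        · refine hmax j ?_
          simp only [Finset.mem_Icc] at hj
          exact Finset.mem_range.mpr (by omega)
    _ = c ^ 2 + (∑ j ∈ Finset.Icc 1 m, β j) * a m := by rw [Finset.sum_mul]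
  have h2 : ∑ j ∈ Finset.Icc 1 m, β j ≤ ∑' j, β j :=
    Summable.sum_le_tsum _ (fun i _ => hβ i) hβsum
  have h3 : (a m) ^ 2 ≤ c ^ 2 + (∑' j, β j) * a m := by nlinarith [ha m]
  by_contra hcon
  push_neg at hcon
  nlinarith [ha m]
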